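/- Define R(s) = (1 - q₀(1 - (1-p)^s)) / (1 - p·q₀)^s for p, q₀ ∈ (0,1) and nonnegative integers s. Then R(s+1) - R(s) = p·q₀·(1-q₀)·(1 - (1-p)^s)·(1 - p·q₀)^{-s-1}, and hence R is nondecreasing in s with R(s) ≥ R(0) = 1. -/

import Mathlib

/-- For `p, q₀ ∈ (0,1)` let `R(s) = (1 - q₀(1-(1-p)^s))/(1 - p q₀)^s`. Then
`R(s+1) - R(s) = p q₀ (1-q₀)(1-(1-p)^s)(1-p q₀)^{-s-1}`, so `R` is nondecreasing
in `s` with `R(s) ≥ R(0) = 1`. -/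
theorem moment_ratio_increasing (p q₀ : ℝ) (hp0 : 0 < p) (hp1 : p < 1)
    (hq0 : 0 < q₀) (hq1 : q₀ < 1)
    (R : ℕ → ℝ) (hR : ∀ s, R s = (1 - q₀ * (1 - (1 - p) ^ s)) / (1 - p * q₀) ^ s) :
    (∀ s : ℕ, R (s + 1) - R s
        = p * q₀ * (1 - q₀) * (1 - (1 - p) ^ s) * (1 - p * q₀) ^ (-(s : ℤ) - 1)) ∧
    Monotone R ∧ R 0 = 1 ∧ ∀ s : ℕ, 1 ≤ R s := by
  have ht : (0:ℝ) < 1 - p * q₀ := by nlinarith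
  have htne : (1 - p * q₀) ≠ 0 := ne_of_gt ht
  have hdiff : ∀ s : ℕ, R (s + 1) - R s
      = p * q₀ * (1 - q₀) * (1 - (1 - p) ^ s) * (1 - p * q₀) ^ (-(s : ℤ) - 1) := by
    intro s
    have hz : (1 - p * q₀) ^ (-(s : ℤ) - 1) = ((1 - p * q₀) ^ (s + 1))⁻¹ := by
      rw [show -(s : ℤ) - 1 = -((s : ℤ) + 1) by ring, zpow_neg]
      norm_cast
    rw [hR, hR, hz]
    have hpow : (1 - p * q₀) ^ (s + 1) ≠ 0 := pow_ne_zero _ htne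
    have hpow' : (1 - p * q₀) ^ s ≠ 0 := pow_ne_zero _ htne
    rw [div_sub_div _ _ hpow hpow', ← div_eq_mul_inv, div_eq_div_iff (mul_ne_zero hpow hpow') hpow]
    ring
  have hnn : ∀ s : ℕ, 0 ≤ R (s + 1) - R s := by
    intro s
    rw [hdiff s]
    have h1 : (1 - p) ^ s ≤ 1 := pow_le_one₀ (by linarith) (by linarith)
    have h2 : (0:ℝ) ≤ (1 - p * q₀) ^ (-(s : ℤ) - 1) := zpow_nonneg (le_of_lt ht) _
    have h3 : (0:ℝ) ≤ p * q₀ * (1 - q₀) * (1 - (1 - p) ^ s) := by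
      exact mul_nonneg (mul_nonneg (le_of_lt (mul_pos hp0 hq0)) (by linarith)) (by linarith)
    exact mul_nonneg h3 h2
  have hmono : Monotone R := monotone_nat_of_le_succ (fun s => by linarith [hnn s])
  have h0 : R 0 = 1 := by simp [hR 0]
  exact ⟨hdiff, hmono, h0, fun s => h0 ▸ hmono (Nat.zero_le s)⟩
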